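/- arXiv:2510.04461 — 2 statements merged into one kernel-verified Lean document; each statement's English description precedes it below -/
import Mathlib

section
/- Let u, v be vertices of a graph G and let G_{u→v} be the Kelmans transformation of G. Then for every t ≥ 2, the Kelmans transformation does not decrease the number of t-cliques: N_t(G_{u→v}) ≥ N_t(G). Moreover, there is an injection φ from the t-cliques of G to the t-cliques of G_{u→v} such that for each t-clique K, either φ(K) = K or φ(K) = (K \ {u}) ∪ {v}. -/
variable {V : Type*}

/-- `kelmansP G u v = P_v(u)`: the neighbors of `u` other than `v` that are
not neighbors of `v`. -/
def kelmansP (G : SimpleGraph V) (u v : V) : Set V :=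
  {w | G.Adj u w ∧ w ≠ v ∧ ¬ G.Adj v w}

/-- The Kelmans transformation `G_{u→v}`: delete the edges from `u` to the
vertices of `P_v(u)` and add edges from `v` to the vertices of `P_v(u)`. -/
def kelmans (G : SimpleGraph V) (u v : V) : SimpleGraph V where
  Adj x y :=
    (G.Adj x y ∧ ¬(x = u ∧ y ∈ kelmansP G u v) ∧ ¬(y = u ∧ x ∈ kelmansP G u v)) ∨
      (x = v ∧ y ∈ kelmansP G u v) ∨ (y = v ∧ x ∈ kelmansP G u v)
  symm := by
    constructor
    intro x y h
    rcases h with ⟨h1, h2, h3⟩ | h | h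
    · exact Or.inl ⟨h1.symm, h3, h2⟩
    · exact Or.inr (Or.inr h)
    · exact Or.inr (Or.inl h)
  loopless := by
    constructor
    intro x h
    rcases h with ⟨h, -⟩ | ⟨rfl, -, h, -⟩ | ⟨rfl, -, h, -⟩
    · exact G.loopless.irrefl x h
    · exact h rfl
    · exact h rfl

/-- The circumference of a graph: the length of a longest cycle
(`0` if there is no cycle). -/
noncomputable def circumference (G : SimpleGraph V) : ℕ :=
  sSup {n | ∃ (u : V) (c : G.Walk u u), c.IsCycle ∧ c.length = n}

/-- The number of vertices of a longest path of `G`. -/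
noncomputable def longestPathVerts (G : SimpleGraph V) : ℕ :=
  sSup {n | ∃ (u v : V) (p : G.Walk u v), p.IsPath ∧ p.length + 1 = n}

open scoped Classical in
/-- The Kelmans transformation does not decrease the number of t-cliques;
moreover there is an injection from the t-cliques of G to those of G_{u→v}
which fixes a clique or replaces u by v in it. -/
theorem kelmans_cliques_mono {V : Type*} [Fintype V] [DecidableEq V]
    (G : SimpleGraph V) (u v : V) (t : ℕ) (ht : 2 ≤ t) :
    (G.cliqueFinset t).card ≤ ((kelmans G u v).cliqueFinset t).card ∧
      ∃ φ : Finset V → Finset V, Set.InjOn φ ↑(G.cliqueFinset t) ∧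
        ∀ K ∈ G.cliqueFinset t, φ K ∈ (kelmans G u v).cliqueFinset t ∧
          (φ K = K ∨ φ K = insert v (K.erase u)) := by
  classical
  set G' := kelmans G u v with hG'
  -- Extraction: a G-clique that fails in G' contains u, misses v, and meets P.
  have key : ∀ K : Finset V, G.IsNClique t K → ¬ G'.IsNClique t K →
      u ∈ K ∧ v ∉ K ∧ ∃ w ∈ K, w ∈ kelmansP G u v := by
    intro K hK hK'
    have hnc : ¬ G'.IsClique (K : Set V) := fun h => hK' ⟨h, hK.2⟩
    rw [SimpleGraph.isClique_iff, Set.Pairwise] at hnc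
    push_neg at hnc
    obtain ⟨x, hx, y, hy, hxy, hnadj⟩ := hnc
    have hadj : G.Adj x y := hK.1 hx hy hxy
    have hcase : (x = u ∧ y ∈ kelmansP G u v) ∨ (y = u ∧ x ∈ kelmansP G u v) := by
      by_contra hc
      exact hnadj (Or.inl ⟨hadj, fun h => hc (Or.inl h), fun h => hc (Or.inr h)⟩)
    have main : ∀ a b : V, a ∈ (K : Set V) → b ∈ (K : Set V) →
        a = u → b ∈ kelmansP G u v → u ∈ K ∧ v ∉ K ∧ ∃ w ∈ K, w ∈ kelmansP G u v := by
      intro a b ha hb hau hbP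
      have haK : u ∈ K := by rwa [hau] at ha
      have hbK : b ∈ K := hb
      refine ⟨haK, ?_, b, hbK, hbP⟩
      intro hvK
      have hbv : v ≠ b := fun h => hbP.2.1 h.symm
      exact hbP.2.2 (hK.1 (by exact_mod_cast hvK) hb hbv)
    rcases hcase with ⟨h1, h2⟩ | ⟨h1, h2⟩
    · exact main x y hx hy h1 h2
    · exact main y x hy hx h1 h2
  -- The swapped set is a clique in G'.
  have keyB : ∀ K : Finset V, G.IsNClique t K → ¬ G'.IsNClique t K →
      G'.IsNClique t (insert v (K.erase u)) := by
    intro K hK hK'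
    obtain ⟨huK, hvK, -⟩ := key K hK hK'
    have huv : u ≠ v := fun h => hvK (h ▸ huK)
    constructor
    · intro x hx y hy hxy
      simp only [Finset.coe_insert, Set.mem_insert_iff, Finset.coe_erase,
        Set.mem_diff, Set.mem_singleton_iff, Finset.mem_coe] at hx hy
      have adj_of : ∀ a : V, a ∈ K → a ≠ u → a ≠ v → G'.Adj v a := by
        intro a haK hau hav
        by_cases hva : G.Adj v a
        · exact Or.inl ⟨hva, fun h => huv h.1.symm, fun h => hau h.1⟩
        · have hua : G.Adj u a := hK.1 huK haK (fun h => hau h.symm)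
          exact Or.inr (Or.inl ⟨rfl, hua, hav, hva⟩)
      rcases hx with rfl | ⟨hxK, hxu⟩
      · rcases hy with rfl | ⟨hyK, hyu⟩
        · exact absurd rfl hxy
        · exact adj_of y hyK hyu (fun h => hxy h.symm)
      · rcases hy with rfl | ⟨hyK, hyu⟩
        · exact (adj_of x hxK hxu hxy).symm
        · exact Or.inl ⟨hK.1 hxK hyK hxy, fun h => hxu h.1, fun h => hyu h.1⟩
    · have hvK' : v ∉ K.erase u := fun h => hvK (Finset.mem_of_mem_erase h)
      rw [Finset.card_insert_of_notMem hvK', Finset.card_erase_of_mem huK, hK.2]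
      omega
  -- The map
  set φ : Finset V → Finset V :=
    fun K => if G'.IsNClique t K then K else insert v (K.erase u) with hφ
  have hmem : ∀ K ∈ G.cliqueFinset t, φ K ∈ G'.cliqueFinset t ∧
      (φ K = K ∨ φ K = insert v (K.erase u)) := by
    intro K hK
    rw [SimpleGraph.mem_cliqueFinset_iff] at hK
    by_cases h : G'.IsNClique t K
    · refine ⟨?_, Or.inl ?_⟩ <;> simp [hφ, h, SimpleGraph.mem_cliqueFinset_iff]
    · refine ⟨?_, Or.inr ?_⟩ <;>
        simp [hφ, h, SimpleGraph.mem_cliqueFinset_iff, keyB K hK h]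
  have hinj : Set.InjOn φ ↑(G.cliqueFinset t) := by
    intro K1 h1 K2 h2 heq
    rw [Finset.mem_coe, SimpleGraph.mem_cliqueFinset_iff] at h1 h2
    by_cases hc1 : G'.IsNClique t K1 <;> by_cases hc2 : G'.IsNClique t K2
    · simpa [hφ, hc1, hc2] using heq
    · -- K1 fixed, K2 swapped
      exfalso
      obtain ⟨huK2, hvK2, w, hwK2, hwP⟩ := key K2 h2 hc2
      have heq' : K1 = insert v (K2.erase u) := by simpa [hφ, hc1, hc2] using heq
      have hwu : w ≠ u := fun h => G.loopless.irrefl u (h ▸ hwP.1)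
      have hwK1 : w ∈ K1 := by
        rw [heq']
        exact Finset.mem_insert_of_mem (Finset.mem_erase.2 ⟨hwu, hwK2⟩)
      have hvK1 : v ∈ K1 := by rw [heq']; exact Finset.mem_insert_self _ _
      have hvw : v ≠ w := fun h => hwP.2.1 h.symm
      exact hwP.2.2 (h1.1 (by exact_mod_cast hvK1) (by exact_mod_cast hwK1) hvw)
    · -- symmetric
      exfalso
      obtain ⟨huK1, hvK1, w, hwK1, hwP⟩ := key K1 h1 hc1
      have heq' : K2 = insert v (K1.erase u) := by
        have := heq.symm; simpa [hφ, hc1, hc2] using this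
      have hwu : w ≠ u := fun h => G.loopless.irrefl u (h ▸ hwP.1)
      have hwK2 : w ∈ K2 := by
        rw [heq']
        exact Finset.mem_insert_of_mem (Finset.mem_erase.2 ⟨hwu, hwK1⟩)
      have hvK2 : v ∈ K2 := by rw [heq']; exact Finset.mem_insert_self _ _
      have hvw : v ≠ w := fun h => hwP.2.1 h.symm
      exact hwP.2.2 (h2.1 (by exact_mod_cast hvK2) (by exact_mod_cast hwK2) hvw)
    · -- both swapped
      obtain ⟨huK1, hvK1, -⟩ := key K1 h1 hc1
      obtain ⟨huK2, hvK2, -⟩ := key K2 h2 hc2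
      have heq' : insert v (K1.erase u) = insert v (K2.erase u) := by
        simpa [hφ, hc1, hc2] using heq
      have herase : K1.erase u = K2.erase u := by
        ext a
        constructor <;> intro ha
        · have hav : a ≠ v := fun h => hvK1 (h ▸ Finset.mem_of_mem_erase ha)
          have : a ∈ insert v (K2.erase u) := heq' ▸ Finset.mem_insert_of_mem ha
          exact (Finset.mem_insert.1 this).resolve_left hav
        · have hav : a ≠ v := fun h => hvK2 (h ▸ Finset.mem_of_mem_erase ha)
          have : a ∈ insert v (K1.erase u) := heq'.symm ▸ Finset.mem_insert_of_mem ha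
          exact (Finset.mem_insert.1 this).resolve_left hav
      calc K1 = insert u (K1.erase u) := (Finset.insert_erase huK1).symm
        _ = insert u (K2.erase u) := by rw [herase]
        _ = K2 := Finset.insert_erase huK2
  refine ⟨?_, φ, hinj, hmem⟩
  exact Finset.card_le_card_of_injOn φ (fun K hK => (hmem K hK).1) hinj
end

section
/- Let G be a graph, u, v vertices of G, and G_{u→v} the Kelmans transformation. Then for every t ≥ 2, the t-clique spectral radius does not decrease: ρ_t(G_{u→v}) ≥ ρ_t(G), where ρ_t(G) = max { t·∑_{{i_1,...,i_t} ∈ K_t(G)} x_{i_1}···x_{i_t} : x ≥ 0, ∑_i x_i^t = 1 }. -/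
variable {V : Type*}

open scoped Classical in
/-- The `t`-clique spectral radius of a graph `G`:
`ρ_t(G) = max { t·∑_{S ∈ K_t(G)} ∏_{i ∈ S} x_i : x ≥ 0, ∑_i x_i^t = 1 }`. -/
noncomputable def cliqueSpectralRadius {V : Type*} [Fintype V]
    (G : SimpleGraph V) (t : ℕ) : ℝ :=
  sSup {r : ℝ | ∃ x : V → ℝ, (∀ i, 0 ≤ x i) ∧ (∑ i, x i ^ t) = 1 ∧
    r = t * ∑ S ∈ G.cliqueFinset t, ∏ i ∈ S, x i}

lemma kelmans_self (G : SimpleGraph V) (u : V) : kelmans G u u = G := by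
  ext a b
  simp only [kelmans, kelmansP, Set.mem_setOf_eq]
  constructor
  · rintro (⟨h, -, -⟩ | ⟨rfl, h1, -, h2⟩ | ⟨rfl, h1, -, h2⟩) <;> first | exact h | exact absurd h1 h2
  · intro h
    exact Or.inl ⟨h, fun ⟨_, _, _, hn⟩ => hn (by tauto), fun ⟨_, _, _, hn⟩ => hn (by tauto)⟩

lemma kelmans_adj_swap (G : SimpleGraph V) (u v a b : V) [DecidableEq V] :
    (kelmans G v u).Adj (Equiv.swap u v a) (Equiv.swap u v b) ↔ (kelmans G u v).Adj a b := by
  by_cases hau : a = u <;> by_cases hav : a = v <;> by_cases hbu : b = u <;> by_cases hbv : b = v <;>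
    simp_all [kelmans, kelmansP, Equiv.swap_apply_def, Set.mem_setOf_eq, G.adj_comm] <;>
    tauto


open scoped Classical in
lemma kelmans_clique_image {V : Type*} [Fintype V] (G : SimpleGraph V) (u v : V) (t : ℕ)
    {S : Finset V} (hS : S ∈ (kelmans G v u).cliqueFinset t) :
    S.image (Equiv.swap u v) ∈ (kelmans G u v).cliqueFinset t := by
  rw [SimpleGraph.mem_cliqueFinset_iff] at *
  obtain ⟨hc, hcard⟩ := hS
  constructor
  · intro a ha b hb hab
    simp only [Finset.coe_image, Set.mem_image] at ha hb
    obtain ⟨a0, ha0, rfl⟩ := ha; obtain ⟨b0, hb0, rfl⟩ := hb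
    have hne : a0 ≠ b0 := fun h => hab (by rw [h])
    have h2 := (kelmans_adj_swap G v u a0 b0).2 (hc ha0 hb0 hne)
    rwa [Equiv.swap_comm] at h2
  · rw [Finset.card_image_of_injective _ (Equiv.injective _), hcard]

open scoped Classical in
lemma kelmans_sum_swap {V : Type*} [Fintype V] (G : SimpleGraph V) (u v : V) (t : ℕ)
    (x : V → ℝ) :
    ∑ S ∈ (kelmans G v u).cliqueFinset t, ∏ i ∈ S, x i =
      ∑ S ∈ (kelmans G u v).cliqueFinset t, ∏ i ∈ S, x (Equiv.swap u v i) := by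
  refine Finset.sum_nbij' (fun S => S.image (Equiv.swap u v))
    (fun S => S.image (Equiv.swap u v))
    (fun S hS => kelmans_clique_image G u v t hS)
    (fun S hS => by rw [Equiv.swap_comm]; exact kelmans_clique_image G v u t hS)
    (fun S _ => by
      simp only [Finset.image_image]
      simp [Function.comp_def, Equiv.swap_apply_self])
    (fun S _ => by
      simp only [Finset.image_image]
      simp [Function.comp_def, Equiv.swap_apply_self])
    (fun S _ => ?_)
  rw [Finset.prod_image (fun a _ b _ h => (Equiv.swap u v).injective h)]
  exact Finset.prod_congr rfl fun i _ => by rw [Equiv.swap_apply_self]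

open scoped Classical in
/-- The clique injection `φ`. -/
noncomputable def kelmansPhi (G : SimpleGraph V) (u v : V) (S : Finset V) : Finset V :=
  if u ∈ S ∧ v ∉ S ∧ ∃ w ∈ S, w ∈ kelmansP G u v then insert v (S.erase u) else S

open scoped Classical in
lemma kelmansPhi_mem {V : Type*} [Fintype V] (G : SimpleGraph V) (u v : V) (huv : u ≠ v)
    (t : ℕ) {S : Finset V} (hS : S ∈ G.cliqueFinset t) :
    kelmansPhi G u v S ∈ (kelmans G u v).cliqueFinset t := by
  rw [SimpleGraph.mem_cliqueFinset_iff] at hS ⊢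
  obtain ⟨hc, hcard⟩ := hS
  unfold kelmansPhi
  by_cases hcond : u ∈ S ∧ v ∉ S ∧ ∃ w ∈ S, w ∈ kelmansP G u v
  · rw [if_pos hcond]
    obtain ⟨huS, hvS, -⟩ := hcond
    have hvne : v ∉ S.erase u := fun h => hvS (Finset.mem_of_mem_erase h)
    have hadj : ∀ b ∈ S, b ≠ u → (kelmans G u v).Adj v b := by
      intro b hbS hbu
      by_cases hbP : b ∈ kelmansP G u v
      · exact Or.inr (Or.inl ⟨rfl, hbP⟩)
      · have hbv : b ≠ v := fun h => hvS (h ▸ hbS)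
        have hub : G.Adj u b := hc huS hbS (Ne.symm hbu)
        have hvb : G.Adj v b := by
          by_contra hn
          exact hbP ⟨hub, hbv, hn⟩
        exact Or.inl ⟨hvb, fun h => huv h.1.symm, fun h => hbu h.1⟩
    constructor
    · intro a ha b hb hab
      simp only [Finset.coe_insert, Set.mem_insert_iff, Finset.mem_coe,
        Finset.mem_erase] at ha hb
      rcases ha with rfl | ⟨hau, haS⟩ <;> rcases hb with rfl | ⟨hbu, hbS⟩
      · exact absurd rfl hab
      · exact hadj b hbS hbu
      · exact (hadj a haS hau).symm
      · have hG := hc haS hbS hab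
        exact Or.inl ⟨hG, fun h => hau h.1, fun h => hbu h.1⟩
    · have ht0 : 0 < t := hcard ▸ Finset.card_pos.2 ⟨u, huS⟩
      rw [Finset.card_insert_of_notMem hvne, Finset.card_erase_of_mem huS, hcard]
      omega
  · rw [if_neg hcond]
    refine ⟨?_, hcard⟩
    intro a ha b hb hab
    have hG := hc ha hb hab
    have main : ∀ c d : V, c ∈ S → d ∈ S → ¬(c = u ∧ d ∈ kelmansP G u v) := by
      rintro c d hcS hdS ⟨rfl, hdP⟩
      by_cases hvS : v ∈ S
      · exact hdP.2.2 (hc hvS hdS (Ne.symm hdP.2.1))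
      · exact hcond ⟨hcS, hvS, d, hdS, hdP⟩
    exact Or.inl ⟨hG, main a b ha hb, main b a hb ha⟩

open scoped Classical in
lemma kelmansPhi_prod (G : SimpleGraph V) (u v : V) (x : V → ℝ) (hx0 : ∀ i, 0 ≤ x i)
    (hxy : x u ≤ x v) (S : Finset V) :
    ∏ i ∈ S, x i ≤ ∏ i ∈ kelmansPhi G u v S, x i := by
  unfold kelmansPhi
  split_ifs with h
  · obtain ⟨huS, hvS, -⟩ := h
    rw [Finset.prod_insert (fun hv => hvS (Finset.mem_of_mem_erase hv))]
    calc ∏ i ∈ S, x i = x u * ∏ i ∈ S.erase u, x i := (Finset.mul_prod_erase S x huS).symm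
      _ ≤ x v * ∏ i ∈ S.erase u, x i :=
        mul_le_mul_of_nonneg_right hxy (Finset.prod_nonneg fun i _ => hx0 i)
  · exact le_refl _

open scoped Classical in
lemma kelmansPhi_injOn {V : Type*} [Fintype V] (G : SimpleGraph V) (u v : V) (t : ℕ) :
    Set.InjOn (kelmansPhi G u v) (G.cliqueFinset t : Set (Finset V)) := by
  intro S₁ h₁ S₂ h₂ heq
  rw [Finset.mem_coe, SimpleGraph.mem_cliqueFinset_iff] at h₁ h₂
  have key : ∀ S T : Finset V, G.IsNClique t S → G.IsNClique t T →
      (u ∈ S ∧ v ∉ S ∧ ∃ w ∈ S, w ∈ kelmansP G u v) →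
      ¬(u ∈ T ∧ v ∉ T ∧ ∃ w ∈ T, w ∈ kelmansP G u v) →
      insert v (S.erase u) ≠ T := by
    rintro S T hS hT ⟨huS, hvS, w, hwS, hwP⟩ hnT heq'
    have hwu : w ≠ u := fun h => G.loopless.irrefl u (h ▸ hwP.1)
    have hvT : v ∈ T := heq' ▸ Finset.mem_insert_self v _
    have hwT : w ∈ T := heq' ▸ Finset.mem_insert_of_mem (Finset.mem_erase.2 ⟨hwu, hwS⟩)
    exact hwP.2.2 (hT.1 hvT hwT (Ne.symm hwP.2.1))
  unfold kelmansPhi at heq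
  split_ifs at heq with c1 c2 c2
  · obtain ⟨hu1, hv1, -⟩ := c1
    obtain ⟨hu2, hv2, -⟩ := c2
    have hv1' : v ∉ S₁.erase u := fun h => hv1 (Finset.mem_of_mem_erase h)
    have hv2' : v ∉ S₂.erase u := fun h => hv2 (Finset.mem_of_mem_erase h)
    have e1 : S₁.erase u = S₂.erase u := by
      rw [← Finset.erase_insert hv1', ← Finset.erase_insert hv2', heq]
    rw [← Finset.insert_erase hu1, ← Finset.insert_erase hu2, e1]
  · exact absurd heq (key S₁ S₂ h₁ h₂ c1 c2)
  · exact absurd heq.symm (key S₂ S₁ h₂ h₁ c2 c1)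
  · exact heq

set_option maxHeartbeats 1000000 in
open scoped Classical in
lemma kelmans_sum_le {V : Type*} [Fintype V] (G : SimpleGraph V) (u v : V) (huv : u ≠ v)
    (t : ℕ) (x : V → ℝ) (hx0 : ∀ i, 0 ≤ x i) (hxy : x u ≤ x v) :
    ∑ S ∈ G.cliqueFinset t, ∏ i ∈ S, x i ≤
      ∑ S ∈ (kelmans G u v).cliqueFinset t, ∏ i ∈ S, x i := by
  calc ∑ S ∈ G.cliqueFinset t, ∏ i ∈ S, x i
      ≤ ∑ S ∈ G.cliqueFinset t, ∏ i ∈ kelmansPhi G u v S, x i :=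
        Finset.sum_le_sum fun S _ => kelmansPhi_prod G u v x hx0 hxy S
    _ = ∑ T ∈ (G.cliqueFinset t).image (kelmansPhi G u v), ∏ i ∈ T, x i :=
        by
          rw [Finset.sum_image (fun S hS S' hS' h =>
            kelmansPhi_injOn G u v t (Finset.mem_coe.2 hS) (Finset.mem_coe.2 hS') h)]
    _ ≤ ∑ S ∈ (kelmans G u v).cliqueFinset t, ∏ i ∈ S, x i := by
        refine Finset.sum_le_sum_of_subset_of_nonneg ?_
          (fun S _ _ => Finset.prod_nonneg fun i _ => hx0 i)
        intro T hT
        obtain ⟨S, hS, rfl⟩ := Finset.mem_image.1 hT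
        exact kelmansPhi_mem G u v huv t hS


open scoped Classical in
lemma kelmans_set_subset {V : Type*} [Fintype V] (G : SimpleGraph V) (u v : V) (t : ℕ)
    (ht : t ≠ 1) :
    {r : ℝ | ∃ x : V → ℝ, (∀ i, 0 ≤ x i) ∧ (∑ i, x i ^ t) = 1 ∧
      r = t * ∑ S ∈ (kelmans G v u).cliqueFinset t, ∏ i ∈ S, x i} ⊆
    {r : ℝ | ∃ x : V → ℝ, (∀ i, 0 ≤ x i) ∧ (∑ i, x i ^ t) = 1 ∧
      r = t * ∑ S ∈ (kelmans G u v).cliqueFinset t, ∏ i ∈ S, x i} := by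
  rintro r ⟨x, hx0, hx1, rfl⟩
  refine ⟨x ∘ Equiv.swap u v, fun i => hx0 _, ?_, ?_⟩
  · rw [← hx1]
    exact Equiv.sum_comp (Equiv.swap u v) fun i => x i ^ t
  · congr 1
    rw [kelmans_sum_swap G u v t x]
    rfl

open scoped Classical in
lemma kelmans_bddAbove {V : Type*} [Fintype V] (G : SimpleGraph V) (t : ℕ) (ht : 1 ≤ t) :
    BddAbove {r : ℝ | ∃ x : V → ℝ, (∀ i, 0 ≤ x i) ∧ (∑ i, x i ^ t) = 1 ∧
      r = t * ∑ S ∈ G.cliqueFinset t, ∏ i ∈ S, x i} := by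
  refine ⟨t * (G.cliqueFinset t).card, ?_⟩
  rintro r ⟨x, hx0, hx1, rfl⟩
  have hx1' : ∀ i, x i ≤ 1 := by
    intro i
    have h1 : x i ^ t ≤ 1 := by
      rw [← hx1]
      exact Finset.single_le_sum (fun j _ => pow_nonneg (hx0 j) t) (Finset.mem_univ i)
    exact (pow_le_one_iff_of_nonneg (hx0 i) (by omega)).1 h1
  calc (t : ℝ) * ∑ S ∈ G.cliqueFinset t, ∏ i ∈ S, x i
      ≤ (t : ℝ) * ∑ _S ∈ G.cliqueFinset t, (1 : ℝ) :=
        mul_le_mul_of_nonneg_left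
          (Finset.sum_le_sum fun S _ =>
            Finset.prod_le_one (fun i _ => hx0 i) (fun i _ => hx1' i))
          (Nat.cast_nonneg t)
    _ = (t : ℝ) * (G.cliqueFinset t).card := by simp


open scoped Classical in
theorem cliqueSpectralRadius_kelmans_ge2 {V : Type*} [Fintype V]
    (G : SimpleGraph V) (u v : V) (t : ℕ) (ht : 2 ≤ t) :
    cliqueSpectralRadius G t ≤ cliqueSpectralRadius (kelmans G u v) t := by
  rcases eq_or_ne u v with rfl | huv
  · rw [kelmans_self]
  · unfold cliqueSpectralRadius
    by_cases hne : ∃ x : V → ℝ, (∀ i, 0 ≤ x i) ∧ (∑ i, x i ^ t) = 1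
    · obtain ⟨x₀, hx₀, hx₁⟩ := hne
      have ht1 : t ≠ 1 := by omega
      have bddA := kelmans_bddAbove (kelmans G u v) t (by omega)
      have bddB := kelmans_bddAbove (kelmans G v u) t (by omega)
      have hsets :
          {r : ℝ | ∃ x : V → ℝ, (∀ i, 0 ≤ x i) ∧ (∑ i, x i ^ t) = 1 ∧
            r = t * ∑ S ∈ (kelmans G v u).cliqueFinset t, ∏ i ∈ S, x i} =
          {r : ℝ | ∃ x : V → ℝ, (∀ i, 0 ≤ x i) ∧ (∑ i, x i ^ t) = 1 ∧
            r = t * ∑ S ∈ (kelmans G u v).cliqueFinset t, ∏ i ∈ S, x i} :=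
        Set.Subset.antisymm (kelmans_set_subset G u v t ht1) (kelmans_set_subset G v u t ht1)
      have h0 : (0:ℝ) ≤ sSup {r : ℝ | ∃ x : V → ℝ, (∀ i, 0 ≤ x i) ∧ (∑ i, x i ^ t) = 1 ∧
          r = t * ∑ S ∈ (kelmans G u v).cliqueFinset t, ∏ i ∈ S, x i} := by
        refine le_trans ?_ (le_csSup bddA ⟨x₀, hx₀, hx₁, rfl⟩)
        exact mul_nonneg (Nat.cast_nonneg t)
          (Finset.sum_nonneg fun S _ => Finset.prod_nonneg fun i _ => hx₀ i)
      refine Real.sSup_le ?_ h0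
      rintro r ⟨x, hx0, hx1, rfl⟩
      rcases le_total (x u) (x v) with hc | hc
      · have hle := kelmans_sum_le G u v huv t x hx0 hc
        exact le_trans (mul_le_mul_of_nonneg_left hle (Nat.cast_nonneg t))
          (le_csSup bddA ⟨x, hx0, hx1, rfl⟩)
      · have hle := kelmans_sum_le G v u huv.symm t x hx0 hc
        calc (t:ℝ) * ∑ S ∈ G.cliqueFinset t, ∏ i ∈ S, x i
            ≤ (t:ℝ) * ∑ S ∈ (kelmans G v u).cliqueFinset t, ∏ i ∈ S, x i :=
              mul_le_mul_of_nonneg_left hle (Nat.cast_nonneg t)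
          _ ≤ sSup {r : ℝ | ∃ x : V → ℝ, (∀ i, 0 ≤ x i) ∧ (∑ i, x i ^ t) = 1 ∧
                r = t * ∑ S ∈ (kelmans G v u).cliqueFinset t, ∏ i ∈ S, x i} :=
              le_csSup bddB ⟨x, hx0, hx1, rfl⟩
          _ = _ := by rw [hsets]
    · have he : ∀ H : SimpleGraph V,
          {r : ℝ | ∃ x : V → ℝ, (∀ i, 0 ≤ x i) ∧ (∑ i, x i ^ t) = 1 ∧
            r = t * ∑ S ∈ H.cliqueFinset t, ∏ i ∈ S, x i} = ∅ := by
        intro H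
        ext r
        simp only [Set.mem_setOf_eq, Set.mem_empty_iff_false, iff_false]
        rintro ⟨x, h1, h2, -⟩
        exact hne ⟨x, h1, h2⟩
      rw [he, he]

/-- The Kelmans transformation does not decrease the t-clique spectral
radius. -/
theorem cliqueSpectralRadius_kelmans_ge {V : Type*} [Fintype V]
    (G : SimpleGraph V) (u v : V) (t : ℕ) (ht : 2 ≤ t) :
    cliqueSpectralRadius G t ≤ cliqueSpectralRadius (kelmans G u v) t :=
  cliqueSpectralRadius_kelmans_ge2 G u v t ht
end
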